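/- arXiv:2509.00070 — 3 statements merged into one kernel-verified Lean document; each statement's English description precedes it below -/
import Mathlib

section
/- For every integer n ≥ 2, F_n = (1/(n-1)) · Σ_{k=1}^{n-1} L_k · F_{n-k}, i.e., the sum Σ_{k=1}^{n-1} L_k · F_{n-k} is divisible by n-1 with quotient F_n (stated over the rationals or as divisibility plus quotient over integers). -/
def L : ℕ → ℕ
  | 0 => 2
  | 1 => 1
  | (n+2) => L (n+1) + L n

lemma LF : ∀ n, L (n+1) = Nat.fib (n+2) + Nat.fib n := by
  intro n
  induction n using Nat.twoStepInduction with
  | zero => decide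
  | one => decide
  | more n ih1 ih2 =>
    show L (n+2) + L (n+1) = _
    rw [ih1, ih2, Nat.fib_add_two (n := n+2), Nat.fib_add_two (n := n)]
    ring

lemma key : ∀ n, ∑ k ∈ Finset.Icc 1 (n+1), L k * Nat.fib (n+2-k) = (n+1) * Nat.fib (n+2) := by
  intro n
  induction n using Nat.twoStepInduction with
  | zero => decide
  | one => decide
  | more n ih1 ih2 =>
    rw [Finset.sum_Icc_succ_top (by omega : 1 ≤ n+3)]
    have h1 : ∑ k ∈ Finset.Icc 1 (n+2), L k * Nat.fib (n+2+2-k)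
        = ∑ k ∈ Finset.Icc 1 (n+2), (L k * Nat.fib (n+3-k) + L k * Nat.fib (n+2-k)) := by
      apply Finset.sum_congr rfl
      intro k hk
      simp only [Finset.mem_Icc] at hk
      have h2 : n+2+2-k = (n+2-k)+2 := by omega
      have h3 : n+3-k = (n+2-k)+1 := by omega
      rw [h2, h3, Nat.fib_add_two, Nat.mul_add, Nat.add_comm (L k * Nat.fib (n+2-k))]
    rw [h1, Finset.sum_add_distrib]
    have h4 : ∑ k ∈ Finset.Icc 1 (n+2), L k * Nat.fib (n+2-k)
        = ∑ k ∈ Finset.Icc 1 (n+1), L k * Nat.fib (n+2-k) := by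
      rw [Finset.sum_Icc_succ_top (by omega : 1 ≤ n+2)]
      simp
    have h5 : (n+2+2-(n+3)) = 1 := by omega
    rw [h4, ih1, ih2, h5, LF (n+2), Nat.fib_one, Nat.fib_add_two (n := n+2)]
    ring

theorem stmt1 (n : ℕ) (hn : 2 ≤ n) :
    (Nat.fib n : ℚ) = (1 / ((n : ℚ) - 1)) * ∑ k ∈ Finset.Icc 1 (n - 1), (L k : ℚ) * Nat.fib (n - k) := by
  obtain ⟨m, rfl⟩ : ∃ m, n = m + 2 := ⟨n - 2, by omega⟩
  have h : (m + 2 - 1) = m + 1 := by omega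
  rw [h]
  have hs : ∑ k ∈ Finset.Icc 1 (m+1), (L k : ℚ) * Nat.fib (m+2-k)
      = ((∑ k ∈ Finset.Icc 1 (m+1), L k * Nat.fib (m+2-k) : ℕ) : ℚ) := by
    push_cast
    rfl
  rw [hs, key m]
  have hne : ((m : ℚ) + 2) - 1 ≠ 0 := by have : (0:ℚ) ≤ m := Nat.cast_nonneg m; linarith
  push_cast
  field_simp
  ring
end

section
/- Using the extended convolution including the k = n term: for every n ≥ 1, Σ_{k=1}^{n} L_k · F_{n-k} = (n-1)·F_n + L_n · F_0 = (n-1)·F_n, where F_0 = 0 (valid for n ≥ 2, and equal to 0 for n = 1). -/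
lemma L_fib : ∀ n, L (n+1) = Nat.fib n + Nat.fib (n+2)
  | 0 => rfl
  | 1 => rfl
  | (n+2) => by
    show L (n+2) + L (n+1) = _
    rw [L_fib n, L_fib (n+1)]
    have e1 : Nat.fib (n+2) = Nat.fib n + Nat.fib (n+1) := Nat.fib_add_two
    have e2 : Nat.fib (n+3) = Nat.fib (n+1) + Nat.fib (n+2) := Nat.fib_add_two
    have e3 : Nat.fib (n+4) = Nat.fib (n+2) + Nat.fib (n+3) := Nat.fib_add_two
    ring_nf at e1 e2 e3 ⊢
    omega

lemma aux : ∀ n, ∑ k ∈ Finset.Icc 1 (n+1), L k * Nat.fib (n+1-k) = n * Nat.fib (n+1)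
  | 0 => by decide
  | 1 => by decide
  | (n+2) => by
    have h1 := aux (n+1)
    have h2 := aux n
    rw [show n+2+1 = (n+2)+1 from rfl, Finset.sum_Icc_succ_top (by omega : 1 ≤ n+3),
      Finset.sum_Icc_succ_top (by omega : 1 ≤ n+2)]
    rw [Finset.sum_Icc_succ_top (by omega : 1 ≤ n+2)] at h1
    simp only [Nat.sub_self, Nat.fib_zero, Nat.mul_zero, Nat.add_zero] at h1 ⊢
    have hsum : ∑ k ∈ Finset.Icc 1 (n+1), L k * Nat.fib (n+3-k)
        = ∑ k ∈ Finset.Icc 1 (n+1), (L k * Nat.fib (n+2-k) + L k * Nat.fib (n+1-k)) := by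
      apply Finset.sum_congr rfl
      intro k hk
      simp only [Finset.mem_Icc] at hk
      have : n+3-k = (n+1-k)+2 := by omega
      rw [this, Nat.fib_add_two]
      have : n+2-k = (n+1-k)+1 := by omega
      rw [this]
      ring
    rw [hsum, Finset.sum_add_distrib, h1, h2,
      show n+3-(n+2) = 1 from by omega, Nat.fib_one, L_fib (n+1)]
    have e3 : Nat.fib (n+1+2) = Nat.fib (n+1) + Nat.fib (n+1+1) := Nat.fib_add_two
    rw [show n+2+1 = n+1+2 from rfl, e3]
    ring

theorem stmt11 (n : ℕ) (hn : 1 ≤ n) :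
    ∑ k ∈ Finset.Icc 1 n, L k * Nat.fib (n - k) = (n - 1) * Nat.fib n := by
  obtain ⟨m, rfl⟩ := Nat.exists_eq_add_of_le hn
  rw [Nat.add_comm 1 m]
  simpa using aux m
end

section
/- For every n ≥ 0, the full convolution including k = 0 satisfies Σ_{k=0}^{n} L_k · F_{n-k} = (n+1)·F_n, where F_0 = 0 and L_0 = 2. -/
lemma L_eq (n : ℕ) : L (n+1) = Nat.fib n + Nat.fib (n+2) := by
  induction n using Nat.twoStepInduction with
  | zero => simp [L]
  | one => simp [L, Nat.fib]
  | more n ih1 ih2 =>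
    have h : L (n+2+1) = L (n+2) + L (n+1) := rfl
    rw [h, ih1, show L (n+1+1) = Nat.fib (n+1) + Nat.fib (n+3) from ih2,
        show Nat.fib (n+2+2) = Nat.fib (n+2) + Nat.fib (n+3) from Nat.fib_add_two,
        show Nat.fib (n+3) = Nat.fib (n+1) + Nat.fib (n+2) from Nat.fib_add_two]
    have := Nat.fib_add_two (n := n)
    ring_nf
    ring_nf at this
    omega

theorem stmt12 (n : ℕ) :
    ∑ k ∈ Finset.range (n + 1), L k * Nat.fib (n - k) = (n + 1) * Nat.fib n := by
  induction n using Nat.twoStepInduction with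
  | zero => simp
  | one => simp [Finset.sum_range_succ, L]
  | more n ih1 ih2 =>
    have key : ∑ k ∈ Finset.range (n + 2 + 1), L k * Nat.fib (n + 2 - k)
        = (∑ k ∈ Finset.range (n + 1 + 1), L k * Nat.fib (n + 1 - k))
          + (∑ k ∈ Finset.range (n + 1), L k * Nat.fib (n - k)) + L (n+1) := by
      rw [Finset.sum_range_succ, Finset.sum_range_succ (n := n+1),
          Finset.sum_range_succ (n := n+1) (f := fun k => L k * Nat.fib (n + 1 - k))]
      have h1 : ∀ k ∈ Finset.range (n+1),
          L k * Nat.fib (n + 2 - k) = L k * Nat.fib (n + 1 - k) + L k * Nat.fib (n - k) := by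
        intro k hk
        rw [Finset.mem_range] at hk
        have : n + 2 - k = (n - k) + 2 := by omega
        have h2 : n + 1 - k = (n - k) + 1 := by omega
        rw [this, h2, Nat.fib_add_two]; ring
      rw [Finset.sum_congr rfl h1, Finset.sum_add_distrib]
      simp [Nat.succ_sub_one]
    rw [key, ih1, ih2, L_eq]
    rw [Nat.fib_add_two (n := n)]; ring
end
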